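/- Let ω > 0 be a real number and let z ∈ ℂ satisfy Re(z) ≥ 0 and Im(z) > 0. Then (ω - z) ≠ e^{-iz}·(ω + z) and (ω - z) ≠ -e^{-iz}·(ω + z); that is, the equation (ω - z)/(ω + z) = ± e^{-iz} has no root in the open upper part of the first quadrant {z : Re(z) ≥ 0, Im(z) > 0}. -/

import Mathlib

theorem no_root_in_upper_first_quadrant (ω : ℝ) (hω : 0 < ω)
    (z : ℂ) (hre : 0 ≤ z.re) (him : 0 < z.im) :
    ((ω : ℂ) - z ≠ Complex.exp (-Complex.I * z) * ((ω : ℂ) + z)) ∧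
    ((ω : ℂ) - z ≠ -Complex.exp (-Complex.I * z) * ((ω : ℂ) + z)) := by
  have hzne : (ω : ℂ) + z ≠ 0 := by
    intro h
    have := congrArg Complex.re h
    simp at this
    linarith
  have hpos : 0 < ‖(ω : ℂ) + z‖ := by
    simpa using (norm_pos_iff.mpr hzne)
  have h1 : ‖(ω : ℂ) - z‖ ^ 2 ≤ ‖(ω : ℂ) + z‖ ^ 2 := by
    rw [Complex.sq_norm, Complex.sq_norm, Complex.normSq_apply, Complex.normSq_apply]
    simp
    nlinarith
  have habs : ‖(ω : ℂ) - z‖ ≤ ‖(ω : ℂ) + z‖ := by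
    nlinarith [norm_nonneg ((ω : ℂ) - z), norm_nonneg ((ω : ℂ) + z)]
  have hexp : 1 < ‖Complex.exp (-Complex.I * z)‖ := by
    rw [Complex.norm_exp]
    have : (-Complex.I * z).re = z.im := by simp
    rw [this]
    exact Real.one_lt_exp_iff.mpr him
  constructor
  · intro h
    have := congrArg (fun w : ℂ => ‖w‖) h
    rw [norm_mul] at this
    nlinarith
  · intro h
    have := congrArg (fun w : ℂ => ‖w‖) h
    rw [neg_mul, norm_neg, norm_mul] at this
    nlinarith
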